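/- Fix an integer k ≥ 1 (the number of words) and let n ≥ 0. Then the union J_n = ⋃_{j=1}^n α_{j,n}⁻¹(I_j) is a disjoint union, and the set of sentences A_n decomposes as the disjoint union A_n = B_n ⊔ ⨆_{1 ≤ j ≤ n, 1 ≤ i ≤ k} α_{j,n}⁻¹(image(f_{j−1}^i)); equivalently, for every sentence T ∈ A_n with T ∉ B_n there exist unique j ∈ {1,…,n} and i ∈ {1,…,k} and a unique T' ∈ B_{j−1} with α_{j,n}(T) = f_{j−1}^i(T'). -/

import Mathlib

/-- A word: a finite sequence of letters (`some a` for a positive integer `a`) and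
placeholders (`none` for `ε`), written left to right (and read right to left). -/
abbrev Word : Type := List (Option ℕ+)

/-- A word is reduced if it has no two consecutive placeholders. -/
def WordReduced (w : Word) : Prop :=
  List.Chain' (fun a b => ¬(a = none ∧ b = none)) w

/-- Reduce a word by fusing consecutive placeholders `εε` into a single `ε`. -/
def reduceWord : Word → Word
  | [] => []
  | [a] => [a]
  | none :: none :: rest => reduceWord (none :: rest)
  | a :: b :: rest => a :: reduceWord (b :: rest)

/-- The map `α_{m,·}` on words: replace each letter larger than `m` by the
placeholder `ε`, then reduce. -/
def alphaWord (m : ℕ) (w : Word) : Word :=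
  reduceWord (w.map fun a =>
    match a with
    | none => none
    | some x => if (x : ℕ) ≤ m then some x else none)

/-- Auxiliary insertion, acting on the reversed (reading-order) word: insert the
letter `x` immediately before the first placeholder, or at the very end if there
is no placeholder. -/
def insertAux (x : ℕ+) : List (Option ℕ+) → List (Option ℕ+)
  | [] => [some x]
  | none :: rest => some x :: none :: rest
  | a :: rest => a :: insertAux x rest

/-- Insert the letter `x` into a word: immediately to the right of the rightmost
placeholder if the word contains one, and at the left end otherwise. -/
def insertLetter (x : ℕ+) (w : Word) : Word :=
  (insertAux x w.reverse).reverse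

/-- A sentence of `k` words. -/
abbrev Sentence (k : ℕ) := Fin k → Word

/-- Membership in `A_n`: all `k` words are reduced, each of the letters `1, …, n`
occurs exactly once in the sentence, and no other letter occurs. -/
def InA (k n : ℕ) (S : Sentence k) : Prop :=
  (∀ i, WordReduced (S i)) ∧
    ∀ a : ℕ+, (∑ i : Fin k, (S i).count (some a)) = if (a : ℕ) ≤ n then 1 else 0

/-- The underlying map of `f_n^i` on sentences: insert the letter `n+1` into the
`i`-th word (to the right of the rightmost placeholder, or at the left end). -/
def finsert (k n : ℕ) (i : Fin k) (S : Sentence k) : Sentence k :=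
  Function.update S i (insertLetter ⟨n + 1, Nat.succ_pos n⟩ (S i))

/-- The map `α_{m,·}` on sentences. -/
def alphaS (k m : ℕ) (S : Sentence k) : Sentence k := fun i => alphaWord m (S i)

/-- The sets `I_n`: `I_0 = ∅` and `I_{n+1} = ⋃_{i} image (f_n^i restricted to B_n)`,
where `B_n = A_n - ⋃_{1 ≤ j ≤ n} α_{j,n}⁻¹(I_j)` (inlined below). -/
def Iset (k : ℕ) : ℕ → Set (Sentence k)
  | 0 => ∅
  | n + 1 =>
    {S | ∃ i : Fin k, ∃ T : Sentence k,
      ((InA k n T ∧ ∀ (j : ℕ) (_hj1 : 1 ≤ j) (_hj2 : j ≤ n), alphaS k j T ∉ Iset k j) ∧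
        S = finsert k n i T)}
  termination_by n => n
  decreasing_by omega

/-- The set `B_n = A_n - J_n`. -/
def Bset (k n : ℕ) : Set (Sentence k) :=
  {S | InA k n S ∧ ∀ (j : ℕ) (_hj1 : 1 ≤ j) (_hj2 : j ≤ n), alphaS k j S ∉ Iset k j}

/-- The set `J_n = ⋃_{1 ≤ j ≤ n} α_{j,n}⁻¹(I_j) ⊆ A_n`. -/
def Jset (k n : ℕ) : Set (Sentence k) :=
  {S | InA k n S ∧ ∃ j : ℕ, 1 ≤ j ∧ j ≤ n ∧ alphaS k j S ∈ Iset k j}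

/-! ### Auxiliary lemmas on `reduceWord` -/

lemma reduce_nil : reduceWord [] = [] := rfl

lemma reduce_singleton (a : Option ℕ+) : reduceWord [a] = [a] := by cases a <;> rfl

lemma reduce_fuse_head (rest : Word) :
    reduceWord (none :: none :: rest) = reduceWord (none :: rest) := rfl

lemma reduce_cons_cons (a b : Option ℕ+) (rest : Word) (h : ¬(a = none ∧ b = none)) :
    reduceWord (a :: b :: rest) = a :: reduceWord (b :: rest) := by
  match a, b with
  | none, none => exact absurd ⟨rfl, rfl⟩ h
  | some a, b => cases b <;> rfl
  | none, some b => rfl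

lemma reduce_head? (l : Word) : (reduceWord l).head? = l.head? := by
  induction l using reduceWord.induct with
  | case1 => rfl
  | case2 a => rw [reduce_singleton]
  | case3 rest ih => rw [reduce_fuse_head]; simpa using ih
  | case4 a b rest h ih => rw [reduce_cons_cons a b rest (by tauto)]; rfl

lemma reduce_cons (x : Option ℕ+) (l : Word) :
    reduceWord (x :: l) =
      if x = none ∧ l.head? = some none then reduceWord l else x :: reduceWord l := by
  match x, l with
  | x, [] => simp [reduce_singleton, reduce_nil]
  | none, none :: r => simp [reduce_fuse_head]
  | none, some b :: r => rw [reduce_cons_cons _ _ _ (by simp)]; simp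
  | some a, b :: r => rw [reduce_cons_cons _ _ _ (by simp)]; simp

lemma reduce_fuse (u v : Word) :
    reduceWord (u ++ none :: none :: v) = reduceWord (u ++ none :: v) := by
  induction u with
  | nil => exact reduce_fuse_head v
  | cons c u ih =>
      rw [List.cons_append, List.cons_append, reduce_cons, reduce_cons, ih]
      congr 1
      cases u <;> simp

lemma reduce_map_reduce (g : Option ℕ+ → Option ℕ+) (hg : g none = none) (l : Word) :
    reduceWord ((reduceWord l).map g) = reduceWord (l.map g) := by
  induction l using reduceWord.induct with
  | case1 => rfl
  | case2 a => rw [reduce_singleton]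
  | case3 rest ih =>
      rw [reduce_fuse_head, ih]
      simp only [List.map_cons, hg, reduce_fuse_head]
  | case4 a b rest h ih =>
      rw [reduce_cons_cons a b rest (by tauto), List.map_cons, reduce_cons,
        List.map_cons, List.map_cons, reduce_cons (g a)]
      have hh : ((reduceWord (b :: rest)).map g).head? = some (g b) := by
        rw [List.head?_map, reduce_head?]; rfl
      rw [hh]
      simp only [List.head?_cons, Option.some.injEq, ← List.map_cons (f := g) (a := b) (l := rest), ih]
      have : (List.map g (b :: rest)).head? = some (g b) := by rw [List.head?_map]; rfl
      rw [this]
      simp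

/-! ### Auxiliary lemmas on `insertAux` and `insertLetter` -/

lemma insertAux_nil (x : ℕ+) : insertAux x [] = [some x] := rfl

lemma insertAux_none (x : ℕ+) (r : List (Option ℕ+)) :
    insertAux x (none :: r) = some x :: none :: r := rfl

lemma insertAux_some (x a : ℕ+) (r : List (Option ℕ+)) :
    insertAux x (some a :: r) = some a :: insertAux x r := rfl

lemma insertAux_ne_nil (x : ℕ+) (l : List (Option ℕ+)) : insertAux x l ≠ [] := by
  induction l using insertAux.induct with
  | case1 => simp [insertAux_nil]
  | case2 r => simp [insertAux_none]
  | case3 a r h ih =>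
      match a, h with
      | some a, _ => simp [insertAux_some]

lemma insertAux_head?_ne (x : ℕ+) (l : List (Option ℕ+)) :
    (insertAux x l).head? ≠ some none := by
  induction l using insertAux.induct with
  | case1 => simp [insertAux_nil]
  | case2 r => simp [insertAux_none]
  | case3 a r h ih =>
      match a, h with
      | some a, _ => simp [insertAux_some]

lemma insertAux_inj (x : ℕ+) : Function.Injective (insertAux x) := by
  intro l1 l2 h
  induction l1 using insertAux.induct generalizing l2 with
  | case1 =>
      match l2 with
      | [] => rfl
      | none :: r => simp [insertAux_nil, insertAux_none] at h
      | some a :: r =>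
          rw [insertAux_nil, insertAux_some] at h
          exact absurd (List.cons.injEq .. ▸ h).2.symm (insertAux_ne_nil x r)
  | case2 r =>
      match l2 with
      | [] => simp [insertAux_nil, insertAux_none] at h
      | none :: r2 => rw [insertAux_none, insertAux_none] at h; simpa using h
      | some a :: r2 =>
          rw [insertAux_none, insertAux_some] at h
          obtain ⟨h1, h2⟩ := List.cons.injEq .. ▸ h
          exact absurd (h2 ▸ insertAux_head?_ne x r2) (by simp)
  | case3 a r h1 ih =>
      match a, h1 with
      | some a, _ =>
        match l2 with
        | [] =>
            rw [insertAux_nil, insertAux_some] at h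
            exact absurd (List.cons.injEq .. ▸ h).2 (insertAux_ne_nil x r)
        | none :: r2 =>
            rw [insertAux_none, insertAux_some] at h
            obtain ⟨h1, h2⟩ := List.cons.injEq .. ▸ h
            exact absurd (h2 ▸ insertAux_head?_ne x r) (by simp)
        | some b :: r2 =>
            rw [insertAux_some, insertAux_some] at h
            obtain ⟨h1, h2⟩ := List.cons.injEq .. ▸ h
            rw [h1, ih h2]

lemma insertAux_append_none (x : ℕ+) (l : List (Option ℕ+)) :
    insertAux x (l ++ [none]) = insertAux x l ++ [none] := by
  induction l using insertAux.induct with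
  | case1 => rfl
  | case2 r => rfl
  | case3 a r h ih =>
      match a, h with
      | some a, _ => rw [List.cons_append, insertAux_some, insertAux_some, List.cons_append, ih]

lemma insertAux_of_not_mem (x : ℕ+) (l : List (Option ℕ+)) (h : none ∉ l) :
    insertAux x l = l ++ [some x] := by
  induction l with
  | nil => rfl
  | cons a r ih =>
      match a with
      | none => simp at h
      | some a =>
          rw [insertAux_some, ih (by simp at h ⊢; exact h)]
          rfl

lemma insertAux_split (x : ℕ+) (l r : List (Option ℕ+)) (h : none ∉ l) :
    insertAux x (l ++ none :: r) = l ++ some x :: none :: r := by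
  induction l with
  | nil => rfl
  | cons a l ih =>
      match a with
      | none => simp at h
      | some a =>
          rw [List.cons_append, insertAux_some, ih (by simp at h ⊢; exact h), List.cons_append]

lemma insertLetter_inj (x : ℕ+) : Function.Injective (insertLetter x) := by
  intro w1 w2 h
  exact List.reverse_injective (insertAux_inj x (List.reverse_injective h))

lemma insertLetter_cons_none (x : ℕ+) (t : Word) :
    insertLetter x (none :: t) = none :: insertLetter x t := by
  unfold insertLetter
  rw [List.reverse_cons, insertAux_append_none, List.reverse_append]
  rfl

lemma insertLetter_of_not_mem (x : ℕ+) (w : Word) (h : none ∉ w) :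
    insertLetter x w = some x :: w := by
  unfold insertLetter
  rw [insertAux_of_not_mem x _ (by simpa using h), List.reverse_append]
  simp

lemma insertLetter_split (x : ℕ+) (u v : Word) (hv : none ∉ v) :
    insertLetter x (u ++ none :: v) = u ++ none :: some x :: v := by
  unfold insertLetter
  rw [List.reverse_append, List.reverse_cons, List.append_assoc, List.singleton_append,
    insertAux_split x _ _ (by simpa using hv)]
  simp

lemma exists_split_last_none (w : Word) (h : none ∈ w) :
    ∃ u v, w = u ++ none :: v ∧ none ∉ v := by
  induction w with
  | nil => simp at h
  | cons a w ih =>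
      by_cases hw : none ∈ w
      · obtain ⟨u, v, huv, hv⟩ := ih hw
        exact ⟨a :: u, v, by rw [huv]; rfl, hv⟩
      · have : a = none := by
          rcases List.mem_cons.mp h with h | h
          · exact h.symm
          · exact absurd h hw
        exact ⟨[], w, by rw [this]; rfl, hw⟩

lemma insertLetter_perm (x : ℕ+) (w : Word) : (insertLetter x w).Perm (some x :: w) := by
  have haux : ∀ l : List (Option ℕ+), (insertAux x l).Perm (some x :: l) := by
    intro l
    induction l with
    | nil => simp [insertAux_nil]
    | cons a r ih =>
        match a with
        | none => rw [insertAux_none]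
        | some a =>
            rw [insertAux_some]
            exact (ih.cons _).trans (List.Perm.swap _ _ _)
  exact (List.reverse_perm _).trans ((haux _).trans ((w.reverse_perm).cons _))

lemma head?_insertLetter (x : ℕ+) (w : Word) :
    (insertLetter x w).head? = if none ∈ w then w.head? else some (some x) := by
  by_cases h : none ∈ w
  · obtain ⟨u, v, rfl, hv⟩ := exists_split_last_none w h
    rw [insertLetter_split x u v hv, if_pos h]
    cases u <;> rfl
  · rw [insertLetter_of_not_mem x w h, if_neg h]
    rfl

/-! ### The letter-deleting map -/

def aMap (m : ℕ) : Option ℕ+ → Option ℕ+ := fun a =>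
  match a with
  | none => none
  | some x => if (x : ℕ) ≤ m then some x else none

lemma alphaWord_eq (m : ℕ) (w : Word) : alphaWord m w = reduceWord (w.map (aMap m)) := rfl

lemma aMap_none (m : ℕ) : aMap m none = none := rfl

lemma aMap_some_of_gt (m : ℕ) (x : ℕ+) (hx : ¬ (x : ℕ) ≤ m) : aMap m (some x) = none := by
  simp [aMap, hx]

lemma aMap_comp {j j' : ℕ} (h : j ≤ j') : (aMap j) ∘ (aMap j') = aMap j := by
  funext a
  match a with
  | none => rfl
  | some x =>
      simp only [Function.comp_apply, aMap]
      by_cases hx : (x : ℕ) ≤ j'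
      · rw [if_pos hx]
      · rw [if_neg hx, if_neg (fun hc => hx (hc.trans h))]

lemma alphaWord_alphaWord {j j' : ℕ} (h : j ≤ j') (w : Word) :
    alphaWord j (alphaWord j' w) = alphaWord j w := by
  rw [alphaWord_eq, alphaWord_eq, alphaWord_eq, reduce_map_reduce _ rfl,
    List.map_map, aMap_comp h]

lemma alphaS_alphaS (k : ℕ) {j j' : ℕ} (h : j ≤ j') (S : Sentence k) :
    alphaS k j (alphaS k j' S) = alphaS k j S := by
  funext i
  exact alphaWord_alphaWord h (S i)

lemma alphaWord_none_cons (j : ℕ) (v : Word) :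
    alphaWord j (none :: v) = alphaWord j v ∨
      (alphaWord j (none :: v) = none :: alphaWord j v ∧
        (alphaWord j v).head? ≠ some none) := by
  rw [alphaWord_eq, alphaWord_eq, List.map_cons, aMap_none]
  by_cases hh : (v.map (aMap j)).head? = some none
  · left
    obtain ⟨r, hr⟩ : ∃ r, v.map (aMap j) = none :: r := by
      cases hv : v.map (aMap j) with
      | nil => rw [hv] at hh; simp at hh
      | cons b r =>
          rw [hv] at hh
          simp only [List.head?_cons, Option.some.injEq] at hh
          exact ⟨r, by rw [hh]⟩
    rw [hr, reduce_fuse_head]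
  · right
    refine ⟨?_, ?_⟩
    · rw [reduce_cons, if_neg (fun hc => hh hc.2)]
    · rw [reduce_head?]
      exact hh

/-! ### Sentence-level relation -/

def SRel (k : ℕ) (i₀ : Fin k) (U V : Sentence k) : Prop :=
  U = V ∨ (U i₀ = none :: V i₀ ∧ (V i₀).head? ≠ some none ∧ ∀ l, l ≠ i₀ → U l = V l)

lemma alphaS_SRel (k j : ℕ) (i₀ : Fin k) (U V : Sentence k)
    (h1 : U i₀ = none :: V i₀) (h3 : ∀ l, l ≠ i₀ → U l = V l) :
    SRel k i₀ (alphaS k j U) (alphaS k j V) := by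
  rcases alphaWord_none_cons j (V i₀) with h | ⟨he, hh⟩
  · left
    funext l
    by_cases hl : l = i₀
    · subst hl
      show alphaWord j (U l) = alphaWord j (V l)
      rw [h1]; exact h
    · show alphaWord j (U l) = alphaWord j (V l)
      rw [h3 l hl]
  · right
    refine ⟨?_, hh, ?_⟩
    · show alphaWord j (U i₀) = none :: alphaWord j (V i₀)
      rw [h1]; exact he
    · intro l hl
      show alphaWord j (U l) = alphaWord j (V l)
      rw [h3 l hl]

/-! ### Membership lemmas -/

lemma Iset_zero (k : ℕ) : Iset k 0 = ∅ := by rw [Iset]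

lemma mem_Iset_succ (k m : ℕ) (S : Sentence k) :
    S ∈ Iset k (m + 1) ↔
      ∃ i : Fin k, ∃ T : Sentence k, T ∈ Bset k m ∧ S = finsert k m i T := by
  rw [Iset]
  rfl

lemma wordReduced_cons_none (t : Word) (h : WordReduced t) (hh : t.head? ≠ some none) :
    WordReduced (none :: t) := by
  show List.IsChain _ (none :: t)
  rw [List.isChain_cons]
  refine ⟨fun b hb => ?_, h⟩
  rintro ⟨-, rfl⟩
  exact hh hb

lemma wordReduced_cons_none_head {t : Word} (h : WordReduced (none :: t)) :
    t.head? ≠ some none := by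
  intro hc
  exact (List.isChain_cons.mp h).1 none hc ⟨rfl, rfl⟩

lemma wordReduced_tail {a : Option ℕ+} {t : Word} (h : WordReduced (a :: t)) :
    WordReduced t := (List.isChain_cons.mp h).2

lemma InA_update (k m : ℕ) (T : Sentence k) (i₀ : Fin k) (w' : Word)
    (h : InA k m T) (hr : WordReduced w')
    (hc : ∀ a : ℕ+, w'.count (some a) = (T i₀).count (some a)) :
    InA k m (Function.update T i₀ w') := by
  constructor
  · intro i
    by_cases hi : i = i₀
    · subst hi; rw [Function.update_self]; exact hr
    · rw [Function.update_of_ne hi]; exact h.1 i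
  · intro a
    rw [← h.2 a]
    refine Finset.sum_congr rfl fun i _ => ?_
    by_cases hi : i = i₀
    · subst hi; rw [Function.update_self, hc]
    · rw [Function.update_of_ne hi]

lemma finsert_same (k m : ℕ) (i : Fin k) (T : Sentence k) :
    finsert k m i T i = insertLetter ⟨m + 1, Nat.succ_pos m⟩ (T i) :=
  Function.update_self ..

lemma finsert_noteq (k m : ℕ) {i l : Fin k} (h : l ≠ i) (T : Sentence k) :
    finsert k m i T l = T l :=
  Function.update_of_ne h _ T

lemma Iset_congr (k : ℕ) : ∀ q : ℕ, ∀ U V : Sentence k, ∀ i₀ : Fin k,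
    SRel k i₀ U V → (U ∈ Iset k q ↔ V ∈ Iset k q) := by
  intro q
  induction q using Nat.strong_induction_on with
  | _ q IH =>
    intro U V i₀ hsr
    rcases hsr with rfl | ⟨h1, h2, h3⟩
    · exact Iff.rfl
    match q with
    | 0 => simp [Iset_zero]
    | m + 1 =>
      have key : ∀ (P Q : Sentence k) (i₁ : Fin k), P i₁ = none :: Q i₁ →
          (∀ l, l ≠ i₁ → P l = Q l) →
          ((∀ j₂, 1 ≤ j₂ → j₂ ≤ m → alphaS k j₂ P ∉ Iset k j₂) ↔
            (∀ j₂, 1 ≤ j₂ → j₂ ≤ m → alphaS k j₂ Q ∉ Iset k j₂)) := by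
        intro P Q i₁ e1 e3
        have hiff : ∀ j₂, 1 ≤ j₂ → j₂ ≤ m →
            (alphaS k j₂ P ∈ Iset k j₂ ↔ alphaS k j₂ Q ∈ Iset k j₂) := fun j₂ hj1 hj2 =>
          IH j₂ (by omega) _ _ i₁ (alphaS_SRel k j₂ i₁ P Q e1 e3)
        constructor
        · intro hB j₂ hj1 hj2 hc
          exact hB j₂ hj1 hj2 ((hiff j₂ hj1 hj2).mpr hc)
        · intro hB j₂ hj1 hj2 hc
          exact hB j₂ hj1 hj2 ((hiff j₂ hj1 hj2).mp hc)
      rw [mem_Iset_succ, mem_Iset_succ]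
      constructor
      · rintro ⟨i, T, ⟨hTA, hTB⟩, rfl⟩
        by_cases hii : i = i₀
        · subst hii
          rw [finsert_same] at h1
          have hmem : none ∈ T i := by
            by_contra hnm
            have := head?_insertLetter ⟨m + 1, Nat.succ_pos m⟩ (T i)
            rw [if_neg hnm, h1] at this
            simp at this
          have hhead : (T i).head? = some none := by
            have := head?_insertLetter ⟨m + 1, Nat.succ_pos m⟩ (T i)
            rw [if_pos hmem, h1] at this
            exact this.symm
          obtain ⟨t, hT0⟩ : ∃ t, T i = none :: t := by
            cases hT : T i with
            | nil => rw [hT] at hhead; simp at hhead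
            | cons b t =>
                rw [hT] at hhead
                simp only [List.head?_cons, Option.some.injEq] at hhead
                exact ⟨t, by rw [hhead]⟩
          rw [hT0, insertLetter_cons_none (⟨m + 1, Nat.succ_pos m⟩ : ℕ+)] at h1
          have hV : V i = insertLetter ⟨m + 1, Nat.succ_pos m⟩ t := by
            simpa using h1.symm
          refine ⟨i, Function.update T i t, ⟨?_, ?_⟩, ?_⟩
          · refine InA_update k m T i t hTA ?_ ?_
            · exact wordReduced_tail (hT0 ▸ hTA.1 i)
            · intro a
              rw [hT0]
              simp [List.count_cons]
          · refine (key T _ i ?_ ?_).mp hTB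
            · rw [Function.update_self, hT0]
            · intro l hl
              rw [Function.update_of_ne hl]
          · funext l
            by_cases hl : l = i
            · subst hl
              rw [finsert_same, Function.update_self, hV]
            · rw [finsert_noteq k m hl, Function.update_of_ne hl, ← h3 l hl,
                finsert_noteq k m hl]
        · -- i ≠ i₀
          rw [finsert_noteq k m (Ne.symm hii)] at h1
          refine ⟨i, Function.update T i₀ (V i₀), ⟨?_, ?_⟩, ?_⟩
          · refine InA_update k m T i₀ (V i₀) hTA ?_ ?_
            · exact wordReduced_tail (h1 ▸ hTA.1 i₀)
            · intro a
              rw [h1]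
              simp [List.count_cons]
          · refine (key T _ i₀ ?_ ?_).mp hTB
            · rw [Function.update_self, h1]
            · intro l hl
              rw [Function.update_of_ne hl]
          · funext l
            by_cases hl : l = i₀
            · subst hl
              rw [finsert_noteq k m (Ne.symm hii), Function.update_self]
            · rw [← h3 l hl]
              by_cases hli : l = i
              · subst hli
                rw [finsert_same, finsert_same, Function.update_of_ne hl]
              · rw [finsert_noteq k m hli, finsert_noteq k m hli, Function.update_of_ne hl]
      · rintro ⟨i, T, ⟨hTA, hTB⟩, rfl⟩
        -- U = (none prepended to word i₀ of the finsert)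
        have hhead : (T i₀).head? ≠ some none := by
          by_cases hii : i = i₀
          · subst hii
            rw [finsert_same] at h2
            rw [head?_insertLetter (⟨m + 1, Nat.succ_pos m⟩ : ℕ+)] at h2
            by_cases hmem : none ∈ T i
            · rwa [if_pos hmem] at h2
            · intro hc
              exact hmem (List.mem_of_mem_head? hc)
          · rw [finsert_noteq k m (Ne.symm hii)] at h2
            exact h2
        refine ⟨i, Function.update T i₀ (none :: T i₀), ⟨?_, ?_⟩, ?_⟩
        · refine InA_update k m T i₀ _ hTA ?_ ?_
          · exact wordReduced_cons_none _ (hTA.1 i₀) hhead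
          · intro a
            simp [List.count_cons]
        · refine (key _ T i₀ ?_ ?_).mpr hTB
          · rw [Function.update_self]
          · intro l hl
            rw [Function.update_of_ne hl]
        · funext l
          by_cases hl : l = i₀
          · subst hl
            rw [h1]
            by_cases hii : i = l
            · subst hii
              rw [finsert_same, finsert_same, Function.update_self,
                insertLetter_cons_none (⟨m + 1, Nat.succ_pos m⟩ : ℕ+)]
            · rw [finsert_noteq k m (Ne.symm hii), finsert_noteq k m (Ne.symm hii),
                Function.update_self]
          · rw [h3 l hl]
            by_cases hli : l = i
            · subst hli
              rw [finsert_same, finsert_same, Function.update_of_ne hl]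
            · rw [finsert_noteq k m hli, finsert_noteq k m hli, Function.update_of_ne hl]

lemma alphaWord_insertLetter (j : ℕ) (x : ℕ+) (hx : ¬ (x : ℕ) ≤ j) (w : Word) :
    alphaWord j (insertLetter x w) = alphaWord j w ∨
      (alphaWord j (insertLetter x w) = none :: alphaWord j w ∧
        (alphaWord j w).head? ≠ some none) := by
  by_cases hnm : none ∈ w
  · left
    obtain ⟨u, v, rfl, hv⟩ := exists_split_last_none w hnm
    rw [insertLetter_split x u v hv, alphaWord_eq, alphaWord_eq, List.map_append,
      List.map_cons, List.map_cons, aMap_none, aMap_some_of_gt j x hx, List.map_append,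
      List.map_cons, aMap_none]
    exact reduce_fuse _ _
  · rw [insertLetter_of_not_mem x w hnm]
    have heq : alphaWord j (some x :: w) = alphaWord j (none :: w) := by
      rw [alphaWord_eq, alphaWord_eq, List.map_cons, List.map_cons, aMap_none,
        aMap_some_of_gt j x hx]
    rw [heq]
    exact alphaWord_none_cons j w

lemma alphaS_finsert_SRel (k j m : ℕ) (i : Fin k) (T : Sentence k) (hjm : j ≤ m) :
    SRel k i (alphaS k j (finsert k m i T)) (alphaS k j T) := by
  have hx : ¬ (((⟨m + 1, Nat.succ_pos m⟩ : ℕ+) : ℕ) ≤ j) := by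
    show ¬ (m + 1 ≤ j)
    omega
  rcases alphaWord_insertLetter j _ hx (T i) with h | ⟨he, hh⟩
  · left
    funext l
    by_cases hl : l = i
    · subst hl
      show alphaWord j (finsert k m l T l) = alphaWord j (T l)
      rw [finsert_same]
      exact h
    · show alphaWord j (finsert k m i T l) = alphaWord j (T l)
      rw [finsert_noteq k m hl T]
  · right
    refine ⟨?_, hh, fun l hl => ?_⟩
    · show alphaWord j (finsert k m i T i) = none :: alphaWord j (T i)
      rw [finsert_same]
      exact he
    · show alphaWord j (finsert k m i T l) = alphaWord j (T l)
      rw [finsert_noteq k m hl T]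

lemma KL (k j m : ℕ) (hj1 : 1 ≤ j) (hjm : j ≤ m) (i : Fin k) (T : Sentence k)
    (hT : ∀ j₂, 1 ≤ j₂ → j₂ ≤ m → alphaS k j₂ T ∉ Iset k j₂) :
    alphaS k j (finsert k m i T) ∉ Iset k j := by
  rw [Iset_congr k j _ _ i (alphaS_finsert_SRel k j m i T hjm)]
  exact hT j hj1 hjm

lemma count_insertLetter (x : ℕ+) (w : Word) (a : Option ℕ+) :
    (insertLetter x w).count a = (some x :: w).count a := by
  simp only [List.count_eq_countP]
  exact (insertLetter_perm x w).countP_eq _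

lemma finsert_inj (k m : ℕ) (i i' : Fin k) (T T' : Sentence k)
    (hT : InA k m T) (hT' : InA k m T')
    (h : finsert k m i T = finsert k m i' T') : i = i' ∧ T = T' := by
  set x : ℕ+ := ⟨m + 1, Nat.succ_pos m⟩ with hxdef
  have hxm : ¬ ((x : ℕ) ≤ m) := by show ¬ (m + 1 ≤ m); omega
  have hcT : ∀ l, (T l).count (some x) = 0 := by
    have h2 := hT.2 x
    rw [if_neg hxm] at h2
    exact fun l => (Finset.sum_eq_zero_iff.mp h2) l (Finset.mem_univ l)
  have hcT' : ∀ l, (T' l).count (some x) = 0 := by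
    have h2 := hT'.2 x
    rw [if_neg hxm] at h2
    exact fun l => (Finset.sum_eq_zero_iff.mp h2) l (Finset.mem_univ l)
  have hii : i = i' := by
    by_contra hne
    have h1 := congrFun h i
    rw [finsert_same, finsert_noteq k m hne] at h1
    have hcount : (insertLetter x (T i)).count (some x) = (T' i).count (some x) := by
      rw [h1]
    rw [count_insertLetter x (T i) (some x)] at hcount
    simp [List.count_cons, hcT i, hcT' i] at hcount
  subst hii
  refine ⟨rfl, funext fun l => ?_⟩
  by_cases hl : l = i
  · subst hl
    have h1 := congrFun h l
    rw [finsert_same, finsert_same] at h1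
    exact insertLetter_inj x h1
  · have h1 := congrFun h l
    rwa [finsert_noteq k m hl, finsert_noteq k m hl] at h1

/-- Fix `k ≥ 1` and `n ≥ 0`. The union `J_n = ⋃_{1 ≤ j ≤ n} α_{j,n}⁻¹(I_j)`
is disjoint and `A_n = B_n ⊔ ⨆_{j,i} α_{j,n}⁻¹(image f_{j-1}^i)`: for every sentence
`S ∈ A_n` with `S ∉ B_n` there exist unique `j ∈ {1,…,n}`, `i ∈ {1,…,k}` and `T' ∈ B_{j-1}`
with `α_{j,n}(S) = f_{j-1}^i(T')`. -/
theorem stmt_9 (k : ℕ) (hk : 1 ≤ k) (n : ℕ) (S : Sentence k)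
    (hSA : InA k n S) (hSB : S ∉ Bset k n) :
    ∃! x : ℕ × Fin k × Sentence k,
      1 ≤ x.1 ∧ x.1 ≤ n ∧ x.2.2 ∈ Bset k (x.1 - 1) ∧
        alphaS k x.1 S = finsert k (x.1 - 1) x.2.1 x.2.2 := by
  
  have hex : ∃ j : ℕ, 1 ≤ j ∧ j ≤ n ∧ alphaS k j S ∈ Iset k j := by
    by_contra hc
    push_neg at hc
    exact hSB ⟨hSA, fun j hj1 hj2 => hc j hj1 hj2⟩
  obtain ⟨j, hj1, hjn, hmem⟩ := hex
  obtain ⟨m, rfl⟩ : ∃ m, j = m + 1 := ⟨j - 1, by omega⟩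
  rw [mem_Iset_succ] at hmem
  obtain ⟨i, T, hTB, heq⟩ := hmem
  refine ⟨(m + 1, i, T), ⟨hj1, hjn, ?_, ?_⟩, ?_⟩
  · simpa only [Nat.add_sub_cancel] using hTB
  · simpa only [Nat.add_sub_cancel] using heq
  · rintro ⟨j', i', T'⟩ ⟨hj'1, hj'n, hT'B, heq'⟩
    obtain ⟨m', rfl⟩ : ∃ m', j' = m' + 1 := ⟨j' - 1, by omega⟩
    simp only [Nat.add_sub_cancel] at hT'B heq' ⊢
    have hjj : m' = m := by
      by_contra hne
      rcases Nat.lt_or_ge m' m with hlt | hge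
      · have h2 : alphaS k (m' + 1) S ∈ Iset k (m' + 1) := by
          rw [mem_Iset_succ]
          exact ⟨i', T', hT'B, heq'⟩
        have h3 : alphaS k (m' + 1) S = alphaS k (m' + 1) (finsert k m i T) := by
          rw [← heq, alphaS_alphaS k (by omega)]
        rw [h3] at h2
        exact KL k (m' + 1) m hj'1 (by omega) i T hTB.2 h2
      · have hgt : m < m' := by omega
        have h2 : alphaS k (m + 1) S ∈ Iset k (m + 1) := by
          rw [mem_Iset_succ]
          exact ⟨i, T, hTB, heq⟩
        have h3 : alphaS k (m + 1) S = alphaS k (m + 1) (finsert k m' i' T') := by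
          rw [← heq', alphaS_alphaS k (by omega)]
        rw [h3] at h2
        exact KL k (m + 1) m' hj1 (by omega) i' T' hT'B.2 h2
    subst hjj
    have hfe : finsert k m' i' T' = finsert k m' i T := by
      rw [← heq, ← heq']
    obtain ⟨hii, hTT⟩ := finsert_inj k m' i' i T' T hT'B.1 hTB.1 hfe
    rw [hii, hTT]
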